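/- For z > −1 the Jacobian matrix Dφ of φ at (x,y,z) has determinant (1+z)^{−4}, and for every measurable function f : ℝ³ → [0,∞] one has the change-of-variables identity ∫_{Ω°} f dλ = ∫_{Ω∞°} f(φ(x,y,z))·(1+z)^{−4} dλ(x,y,z), where λ is three-dimensional Lebesgue measure. (In particular φ pulls L²(Ω) back isometrically to the (1+z)^{−4}-weighted L² space on Ω∞.) -/

import Mathlib

open MeasureTheory

noncomputable section

/-- The interior `Ω°` of the finite pyramid. -/
def PyrInt : Set (ℝ × ℝ × ℝ) :=
  {p | 0 < p.1 ∧ 0 < p.2.1 ∧ 0 < p.2.2 ∧ p.1 < 1 - p.2.2 ∧ p.2.1 < 1 - p.2.2}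

/-- The interior `Ω∞° = (0,1) × (0,1) × (0,∞)` of the infinite pyramid. -/
def PyrInfInt : Set (ℝ × ℝ × ℝ) :=
  {p | 0 < p.1 ∧ p.1 < 1 ∧ 0 < p.2.1 ∧ p.2.1 < 1 ∧ 0 < p.2.2}

/-- The projective map `φ(x,y,z) = (x/(1+z), y/(1+z), z/(1+z))`. -/
def phi : ℝ × ℝ × ℝ → ℝ × ℝ × ℝ :=
  fun p => (p.1 / (1 + p.2.2), p.2.1 / (1 + p.2.2), p.2.2 / (1 + p.2.2))

open ContinuousLinearMap in
def CX : (ℝ × ℝ × ℝ) →L[ℝ] ℝ := fst ℝ ℝ (ℝ × ℝ)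
open ContinuousLinearMap in
def CY : (ℝ × ℝ × ℝ) →L[ℝ] ℝ := (fst ℝ ℝ ℝ).comp (snd ℝ ℝ (ℝ × ℝ))
open ContinuousLinearMap in
def CZ : (ℝ × ℝ × ℝ) →L[ℝ] ℝ := (snd ℝ ℝ ℝ).comp (snd ℝ ℝ (ℝ × ℝ))

def dphi (p : ℝ × ℝ × ℝ) : (ℝ × ℝ × ℝ) →L[ℝ] (ℝ × ℝ × ℝ) :=
  ((1 + p.2.2)⁻¹ • CX - (p.1 / (1 + p.2.2) ^ 2) • CZ).prod
    ((((1 + p.2.2)⁻¹ • CY - (p.2.1 / (1 + p.2.2) ^ 2) • CZ)).prod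
      ((((1 + p.2.2) ^ 2)⁻¹) • CZ))

open ContinuousLinearMap in
theorem hasFDerivAt_phi {p : ℝ × ℝ × ℝ} (hz : -1 < p.2.2) :
    HasFDerivAt phi (dphi p) p := by
  have hne : (1 : ℝ) + p.2.2 ≠ 0 := by linarith
  have hc : HasFDerivAt (fun q : ℝ × ℝ × ℝ => 1 + q.2.2) CZ p :=
    (hasFDerivAt_snd.comp p hasFDerivAt_snd).const_add 1
  have hinv : HasFDerivAt (fun q : ℝ × ℝ × ℝ => (1 + q.2.2)⁻¹)
      ((smulRight (1 : ℝ →L[ℝ] ℝ) (-((1 + p.2.2) ^ 2)⁻¹)).comp CZ) p :=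
    (hasFDerivAt_inv hne).comp p hc
  have h1 : HasFDerivAt (fun q : ℝ × ℝ × ℝ => q.1 * (1 + q.2.2)⁻¹) _ p :=
    (hasFDerivAt_fst).mul hinv
  have h2 : HasFDerivAt (fun q : ℝ × ℝ × ℝ => q.2.1 * (1 + q.2.2)⁻¹) _ p :=
    (hasFDerivAt_fst.comp p hasFDerivAt_snd).mul hinv
  have h3 : HasFDerivAt (fun q : ℝ × ℝ × ℝ => q.2.2 * (1 + q.2.2)⁻¹) _ p :=
    (hasFDerivAt_snd.comp p hasFDerivAt_snd).mul hinv
  have := h1.prodMk (h2.prodMk h3)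
  have heq : phi = fun q : ℝ × ℝ × ℝ =>
      (q.1 * (1 + q.2.2)⁻¹, q.2.1 * (1 + q.2.2)⁻¹, q.2.2 * (1 + q.2.2)⁻¹) := by
    funext q; simp [phi, div_eq_mul_inv]
  rw [heq]
  refine this.congr_fderiv ?_
  refine ContinuousLinearMap.ext fun v => ?_
  have h2z : (1 + p.2.2) ^ 2 ≠ 0 := pow_ne_zero _ hne
  simp only [dphi, CX, CY, CZ, prod_apply, ContinuousLinearMap.add_apply,
    ContinuousLinearMap.sub_apply, ContinuousLinearMap.smul_apply, smulRight_apply,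
    ContinuousLinearMap.comp_apply, coe_fst', coe_snd', ContinuousLinearMap.one_apply,
    smul_eq_mul, Prod.mk.injEq]
  refine ⟨by field_simp; ring, by field_simp; ring, by field_simp; ring⟩

def e3 : (ℝ × ℝ × ℝ) ≃ₗ[ℝ] (Fin 3 → ℝ) where
  toFun q := ![q.1, q.2.1, q.2.2]
  invFun v := (v 0, v 1, v 2)
  map_add' a b := by funext i; fin_cases i <;> simp
  map_smul' c a := by funext i; fin_cases i <;> simp
  left_inv q := by simp
  right_inv v := by funext i; fin_cases i <;> simp

def b3 : Module.Basis (Fin 3) ℝ (ℝ × ℝ × ℝ) := Module.Basis.ofEquivFun e3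

set_option maxHeartbeats 1000000 in
theorem det_dphi {p : ℝ × ℝ × ℝ} (hz : -1 < p.2.2) :
    LinearMap.det (dphi p).toLinearMap = 1 / (1 + p.2.2) ^ 4 := by
  have hne : (1 : ℝ) + p.2.2 ≠ 0 := by linarith
  have hM : LinearMap.toMatrix b3 b3 (dphi p).toLinearMap =
      !![(1 + p.2.2)⁻¹, 0, -(p.1 / (1 + p.2.2) ^ 2);
         0, (1 + p.2.2)⁻¹, -(p.2.1 / (1 + p.2.2) ^ 2);
         0, 0, ((1 + p.2.2) ^ 2)⁻¹] := by
    ext i j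
    fin_cases i <;> fin_cases j <;>
      simp [LinearMap.toMatrix_apply, b3, e3, dphi, CX, CY, CZ, Pi.single_apply,
        ContinuousLinearMap.prod_apply, ContinuousLinearMap.sub_apply,
        ContinuousLinearMap.smul_apply, ContinuousLinearMap.comp_apply,
        smul_eq_mul, Matrix.vecHead, Matrix.vecTail] <;> try ring
  rw [← LinearMap.det_toMatrix b3, hM, Matrix.det_fin_three]
  try norm_num [Matrix.vecHead, Matrix.vecTail, Function.comp]
  simp only [Matrix.cons_val]
  field_simp
  ring

theorem phi_image : phi '' PyrInfInt = PyrInt := by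
  ext q
  constructor
  · rintro ⟨p, ⟨hx0, hx1, hy0, hy1, hz0⟩, rfl⟩
    have hc : (0 : ℝ) < 1 + p.2.2 := by linarith
    have key : 1 - p.2.2 / (1 + p.2.2) = 1 / (1 + p.2.2) := by field_simp; ring
    refine ⟨div_pos hx0 hc, div_pos hy0 hc, div_pos hz0 hc, ?_, ?_⟩
    · show p.1 / (1 + p.2.2) < 1 - p.2.2 / (1 + p.2.2)
      rw [key]
      exact (div_lt_div_iff_of_pos_right hc).mpr hx1
    · show p.2.1 / (1 + p.2.2) < 1 - p.2.2 / (1 + p.2.2)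
      rw [key]
      exact (div_lt_div_iff_of_pos_right hc).mpr hy1
  · rintro ⟨hX0, hY0, hZ0, hX, hY⟩
    have hZ1 : q.2.2 < 1 := by linarith
    have hd : (0 : ℝ) < 1 - q.2.2 := by linarith
    have hd' : (1 : ℝ) - q.2.2 ≠ 0 := ne_of_gt hd
    refine ⟨(q.1 / (1 - q.2.2), q.2.1 / (1 - q.2.2), q.2.2 / (1 - q.2.2)), ?_, ?_⟩
    · exact ⟨div_pos hX0 hd, (div_lt_one hd).mpr (by linarith),
        div_pos hY0 hd, (div_lt_one hd).mpr (by linarith), div_pos hZ0 hd⟩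
    · have hsum : 1 + q.2.2 / (1 - q.2.2) = 1 / (1 - q.2.2) := by field_simp; ring
      show (q.1 / (1 - q.2.2) / (1 + q.2.2 / (1 - q.2.2)),
            q.2.1 / (1 - q.2.2) / (1 + q.2.2 / (1 - q.2.2)),
            q.2.2 / (1 - q.2.2) / (1 + q.2.2 / (1 - q.2.2))) = q
      rw [hsum]
      refine Prod.ext ?_ (Prod.ext ?_ ?_) <;> · show _ / _ / (1 / (1 - q.2.2)) = _; field_simp

theorem phi_injOn : Set.InjOn phi PyrInfInt := by
  have left_inv : ∀ p : ℝ × ℝ × ℝ, -1 < p.2.2 →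
      ((phi p).1 / (1 - (phi p).2.2), (phi p).2.1 / (1 - (phi p).2.2),
        (phi p).2.2 / (1 - (phi p).2.2)) = p := by
    intro p hz
    have hc : (0 : ℝ) < 1 + p.2.2 := by linarith
    have hc' : (1 : ℝ) + p.2.2 ≠ 0 := ne_of_gt hc
    have key : 1 - p.2.2 / (1 + p.2.2) = 1 / (1 + p.2.2) := by field_simp; ring
    simp only [phi, key]
    refine Prod.ext ?_ (Prod.ext ?_ ?_) <;> · show _ / _ / (1 / (1 + p.2.2)) = _; field_simp
  intro a ha b hb h
  have hza : -1 < a.2.2 := by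
    simp only [PyrInfInt, Set.mem_setOf_eq] at ha; linarith [ha.2.2.2.2]
  have hzb : -1 < b.2.2 := by
    simp only [PyrInfInt, Set.mem_setOf_eq] at hb; linarith [hb.2.2.2.2]
  have := left_inv a hza
  rw [h] at this
  rw [left_inv b hzb] at this
  exact this.symm

instance : (volume : Measure (ℝ × ℝ)).IsAddHaarMeasure :=
  Measure.prod.instIsAddHaarMeasure _ _

instance : (volume : Measure (ℝ × ℝ × ℝ)).IsAddHaarMeasure :=
  Measure.prod.instIsAddHaarMeasure _ _

theorem measurableSet_PyrInfInt : MeasurableSet PyrInfInt := by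
  have : PyrInfInt = (Set.Ioo (0:ℝ) 1) ×ˢ ((Set.Ioo (0:ℝ) 1) ×ˢ (Set.Ioi (0:ℝ))) := by
    ext p; simp [PyrInfInt, Set.mem_prod, and_assoc]; try tauto
  rw [this]
  exact measurableSet_Ioo.prod (measurableSet_Ioo.prod measurableSet_Ioi)

/-- for `z > −1` the Jacobian of `φ` has determinant `(1+z)⁻⁴`, and for every
measurable `f : ℝ³ → [0,∞]` one has the change-of-variables identity
`∫_{Ω°} f dλ = ∫_{Ω∞°} f(φ(x,y,z))·(1+z)⁻⁴ dλ(x,y,z)`. -/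
theorem phi_jacobian_and_change_of_variables :
    (∀ p : ℝ × ℝ × ℝ, -1 < p.2.2 →
      LinearMap.det (fderiv ℝ phi p).toLinearMap = 1 / (1 + p.2.2) ^ 4) ∧
    (∀ f : ℝ × ℝ × ℝ → ENNReal, Measurable f →
      ∫⁻ q in PyrInt, f q ∂volume =
        ∫⁻ p in PyrInfInt, f (phi p) * ENNReal.ofReal (1 / (1 + p.2.2) ^ 4) ∂volume) := by
  constructor
  · intro p hz
    rw [(hasFDerivAt_phi hz).fderiv]
    exact det_dphi hz
  · intro f hf
    rw [← phi_image]
    rw [lintegral_image_eq_lintegral_abs_det_fderiv_mul volume measurableSet_PyrInfInt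
      (fun x hx => (hasFDerivAt_phi (by simp only [PyrInfInt, Set.mem_setOf_eq] at hx; linarith [hx.2.2.2.2]
        )).hasFDerivWithinAt) phi_injOn f]
    refine setLIntegral_congr_fun measurableSet_PyrInfInt (fun p hp => ?_)
    have hz : -1 < p.2.2 := by
      simp only [PyrInfInt, Set.mem_setOf_eq] at hp; linarith [hp.2.2.2.2]
    have hdet : (dphi p).det = 1 / (1 + p.2.2) ^ 4 := det_dphi hz
    have hpos : (0:ℝ) < 1 / (1 + p.2.2) ^ 4 := one_div_pos.mpr (pow_pos (by linarith) 4)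
    rw [hdet, abs_of_pos hpos, mul_comm]
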